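/- Let A be an m × n real matrix and K = {x ∈ ℝⁿ : Ax ≤ 0}. Then the polar cone of K equals {Aᵀa : a ∈ ℝᵐ, a ≥ 0}, i.e., the rows of A generate K° (a Farkas-type lemma). -/

import Mathlib

open Matrix
open scoped RealInnerProductSpace

open Finset in
/-- A finitely generated cone in a finite-dimensional normed space is closed. -/
lemma cone_isClosed {E : Type*} [NormedAddCommGroup E] [NormedSpace ℝ E]
    [FiniteDimensional ℝ E] :
    ∀ (m : ℕ) (v : Fin m → E),
      IsClosed {x : E | ∃ a : Fin m → ℝ, (∀ i, 0 ≤ a i) ∧ x = ∑ i, a i • v i} := by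
  intro m
  induction m with
  | zero =>
    intro v
    have : {x : E | ∃ a : Fin 0 → ℝ, (∀ i, 0 ≤ a i) ∧ x = ∑ i, a i • v i} = {0} := by
      ext x
      simp only [Set.mem_setOf_eq, Set.mem_singleton_iff]
      constructor
      · rintro ⟨a, -, rfl⟩; simp
      · rintro rfl; exact ⟨fun i => i.elim0, fun i => i.elim0, by simp⟩
    rw [this]; exact isClosed_singleton
  | succ k ih =>
    intro v
    by_cases hv : LinearIndependent ℝ v
    · -- linearly independent generators: image under a closed embedding
      let L : (Fin (k + 1) → ℝ) →ₗ[ℝ] E :=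
        { toFun := fun a => ∑ i, a i • v i
          map_add' := by intro a b; simp [add_smul, Finset.sum_add_distrib]
          map_smul' := by intro c a; simp [smul_smul, Finset.smul_sum]
        }
      have hinj : LinearMap.ker L = ⊥ := by
        rw [LinearMap.ker_eq_bot']
        intro a ha
        have := Fintype.linearIndependent_iff.mp hv a ha
        funext i; exact this i
      have hce := LinearMap.isClosedEmbedding_of_injective hinj
      have hset : {x : E | ∃ a : Fin (k + 1) → ℝ, (∀ i, 0 ≤ a i) ∧ x = ∑ i, a i • v i}
          = L '' {a : Fin (k + 1) → ℝ | ∀ i, 0 ≤ a i} := by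
        ext x
        constructor
        · rintro ⟨a, ha, rfl⟩; exact ⟨a, ha, rfl⟩
        · rintro ⟨a, ha, rfl⟩; exact ⟨a, ha, rfl⟩
      rw [hset]
      refine hce.isClosedMap _ ?_
      have : {a : Fin (k + 1) → ℝ | ∀ i, 0 ≤ a i} = ⋂ i, {a | 0 ≤ a i} := by
        ext a; simp
      rw [this]
      exact isClosed_iInter fun i => isClosed_le continuous_const (continuous_apply i)
    · -- dependent generators: the cone is a finite union of cones with fewer generators
      obtain ⟨g, hg, i₀, hi₀⟩ := Fintype.not_linearIndependent_iff.mp hv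
      -- get a relation with some strictly positive coefficient
      obtain ⟨c, hc, j₀, hj₀⟩ :
          ∃ c : Fin (k + 1) → ℝ, (∑ i, c i • v i = 0) ∧ ∃ j, 0 < c j := by
        rcases hi₀.lt_or_gt with h | h
        · refine ⟨-g, ?_, i₀, by simpa using h⟩
          simp [neg_smul, Finset.sum_neg_distrib, hg]
        · exact ⟨g, hg, i₀, h⟩
      have hset : {x : E | ∃ a : Fin (k + 1) → ℝ, (∀ i, 0 ≤ a i) ∧ x = ∑ i, a i • v i}
          = ⋃ j : Fin (k + 1),
            {x : E | ∃ a : Fin k → ℝ, (∀ i, 0 ≤ a i) ∧ x = ∑ i, a i • v (j.succAbove i)} := by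
        ext x
        constructor
        · rintro ⟨a, ha, rfl⟩
          -- shift coefficients along the relation `c` until one vanishes
          set s : Finset (Fin (k + 1)) := Finset.univ.filter (fun i => 0 < c i) with hs
          have hsne : s.Nonempty := ⟨j₀, by simp [hs, hj₀]⟩
          obtain ⟨j, hjs, hjmin⟩ := s.exists_min_image (fun i => a i / c i) hsne
          have hcj : 0 < c j := by simpa [hs] using hjs
          set t : ℝ := a j / c j with ht
          have htnn : 0 ≤ t := div_nonneg (ha j) hcj.le
          set b : Fin (k + 1) → ℝ := fun i => a i - t * c i with hb
          have hbnn : ∀ i, 0 ≤ b i := by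
            intro i
            by_cases hci : 0 < c i
            · have := hjmin i (by simp [hs, hci])
              have : t * c i ≤ a i := by
                rw [← le_div_iff₀ hci]; exact this
              simpa [hb] using sub_nonneg.mpr this
            · push_neg at hci
              have : t * c i ≤ 0 := mul_nonpos_of_nonneg_of_nonpos htnn hci
              have := sub_nonneg.mpr (this.trans (ha i))
              simpa [hb] using this
          have hbj : b j = 0 := by
            simp [hb, ht, div_mul_cancel₀ _ hcj.ne']
          have hsum : ∑ i, b i • v i = ∑ i, a i • v i := by
            simp only [hb, sub_smul, smul_smul, Finset.sum_sub_distrib]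
            have : ∑ i, (t * c i) • v i = t • ∑ i, c i • v i := by
              simp [Finset.smul_sum, smul_smul]
            rw [this, hc, smul_zero, sub_zero]
          refine Set.mem_iUnion.mpr ⟨j, fun i => b (j.succAbove i), fun i => hbnn _, ?_⟩
          rw [← hsum, Fin.sum_univ_succAbove (fun i => b i • v i) j, hbj, zero_smul, zero_add]
        · rintro h
          obtain ⟨j, a, ha, rfl⟩ := Set.mem_iUnion.mp h
          set b : Fin (k + 1) → ℝ := j.insertNth 0 a with hbdef
          refine ⟨b, ?_, ?_⟩
          · intro i
            refine j.succAboveCases ?_ ?_ i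
            · simp [hbdef]
            · intro i'; simpa [hbdef] using ha i'
          · rw [Fin.sum_univ_succAbove (fun i => b i • v i) j]
            simp [hbdef]
      rw [hset]
      exact isClosed_iUnion_of_finite fun j => ih (fun i => v (j.succAbove i))

/-- Farkas-type lemma: the polar cone of `K = {x | Ax ≤ 0}` equals the conical
hull of the rows of `A`, i.e. `{Aᵀa : a ≥ 0}`. -/
theorem polar_eq_rows_cone (m n : ℕ) (A : Matrix (Fin m) (Fin n) ℝ) :
    {x : EuclideanSpace ℝ (Fin n) |
        ∀ k ∈ {k : EuclideanSpace ℝ (Fin n) | ∀ i, A.mulVec k i ≤ 0},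
          ⟪k, x⟫ ≤ 0} =
      {x : EuclideanSpace ℝ (Fin n) |
        ∃ a : Fin m → ℝ, (∀ i, 0 ≤ a i) ∧ x = Aᵀ.mulVec a} := by
  classical
  -- the rows of `A` as vectors of Euclidean space
  set v : Fin m → EuclideanSpace ℝ (Fin n) := fun i => WithLp.toLp 2 (fun j => A i j) with hv
  have hmulVec : ∀ a : Fin m → ℝ,
      Aᵀ.mulVec a = (∑ i, a i • v i).ofLp := by
    intro a
    funext j
    have : (∑ i, a i • v i) j = ∑ i, a i * A i j := by
      rw [WithLp.ofLp_sum, Finset.sum_apply]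
      simp [hv]
    rw [this]
    simp [Matrix.mulVec, dotProduct, Matrix.transpose_apply, mul_comm]
  have hinner : ∀ (k x : EuclideanSpace ℝ (Fin n)), ⟪k, x⟫ = ∑ j, k j * x j := by
    intro k x
    simp [PiLp.inner_apply, RCLike.inner_apply, mul_comm]
  -- the finitely generated cone, as a set
  set S : Set (EuclideanSpace ℝ (Fin n)) :=
    {x | ∃ a : Fin m → ℝ, (∀ i, 0 ≤ a i) ∧ x = ∑ i, a i • v i} with hS
  have hSclosed : IsClosed S := cone_isClosed m v
  -- `S` as a convex cone
  let C : ConvexCone ℝ (EuclideanSpace ℝ (Fin n)) :=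
    { carrier := S
      smul_mem' := by
        rintro r hr x ⟨a, ha, rfl⟩
        exact ⟨fun i => r * a i, fun i => mul_nonneg hr.le (ha i), by
          simp [Finset.smul_sum, smul_smul]⟩
      add_mem' := by
        rintro x ⟨a, ha, rfl⟩ y ⟨b, hb, rfl⟩
        exact ⟨fun i => a i + b i, fun i => add_nonneg (ha i) (hb i), by
          simp [add_smul, Finset.sum_add_distrib]⟩ }
  have hCne : (C : Set (EuclideanSpace ℝ (Fin n))).Nonempty :=
    ⟨0, ⟨fun _ => 0, fun _ => le_rfl, by simp⟩⟩
  ext x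
  simp only [Set.mem_setOf_eq]
  constructor
  · -- hard direction: via hyperplane separation
    intro hx
    by_contra hxS
    have hxS' : x ∉ C := by
      intro h
      obtain ⟨a, ha, hxa⟩ := h
      exact hxS ⟨a, ha, by rw [hxa, hmulVec]⟩
    obtain ⟨y, hy1, hy2⟩ :=
      ProperCone.hyperplane_separation' (E := EuclideanSpace ℝ (Fin n))
        ⟨⟨⟨⟨S, fun hx hy => C.add_mem hx hy⟩, ⟨fun _ => 0, fun _ => le_rfl, by simp⟩⟩,
          fun c x hx => by
            rcases eq_or_lt_of_le c.2 with hc | hc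
            · have : c = 0 := NNReal.coe_eq_zero.mp hc.symm
              subst this
              rw [zero_smul]; exact ⟨fun _ => 0, fun _ => le_rfl, by simp⟩
            · exact C.smul_mem (c := (c : ℝ)) hc hx⟩, hSclosed⟩ hxS'
    -- `-y` belongs to `K`
    have hyK : ∀ i, A.mulVec (-y) i ≤ 0 := by
      intro i
      have hvi : v i ∈ C := by
        refine ⟨fun i' => if i' = i then 1 else 0, fun i' => ?_, ?_⟩
        · dsimp only; split <;> norm_num
        · simp [Finset.sum_ite_eq']
      have h0 := hy1 (v i) hvi
      rw [hinner] at h0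
      have hAy : A.mulVec y i = ∑ j, A i j * y j := by
        simp [Matrix.mulVec, dotProduct]
      have : A.mulVec (-y) i = - A.mulVec y i := by
        simp [Matrix.mulVec, dotProduct, PiLp.neg_apply, mul_neg,
          Finset.sum_neg_distrib]
      rw [this, hAy]
      simp only [neg_nonpos]
      calc (0:ℝ) ≤ ∑ j, v i j * y j := h0
        _ = ∑ j, A i j * y j := by simp [hv]
    have := hx (-y) hyK
    rw [hinner] at this
    rw [hinner] at hy2
    have : -∑ j, y j * x j ≤ 0 := by
      calc -∑ j, y j * x j = ∑ j, (-y) j * x j := by simp [Finset.sum_neg_distrib]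
        _ ≤ 0 := this
    rw [Finset.sum_congr rfl fun j _ => mul_comm (x j) (y j)] at hy2
    linarith
  · -- easy direction
    rintro ⟨a, ha, hxa⟩ k hk
    obtain rfl : x = WithLp.toLp 2 (Aᵀ.mulVec a) := by rw [← hxa]
    rw [hinner]
    have : ∀ j, (WithLp.toLp 2 (Aᵀ.mulVec a) : EuclideanSpace ℝ (Fin n)) j = ∑ i, a i * A i j := by
      intro j; simp [Matrix.mulVec, dotProduct, Matrix.transpose_apply, mul_comm]
    calc ∑ j, k j * (WithLp.toLp 2 (Aᵀ.mulVec a) : EuclideanSpace ℝ (Fin n)) j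
        = ∑ j, ∑ i, a i * (A i j * k j) := by
          exact Finset.sum_congr rfl fun j _ => by
            rw [this j, Finset.mul_sum]; exact Finset.sum_congr rfl fun i _ => by ring
      _ = ∑ i, a i * A.mulVec k i := by
          rw [Finset.sum_comm]
          simp [Matrix.mulVec, dotProduct, Finset.mul_sum]
      _ ≤ 0 := Finset.sum_nonpos fun i _ =>
          mul_nonpos_of_nonneg_of_nonpos (ha i) (hk i)
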